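/- For each positive integer n, the diagonal CGPT matrix M_{nn}(D) is invertible; more precisely, for every nonzero v ∈ C^{2n+1}, the quadratic form v* M_{nn}(D) v is nonzero (strictly positive if λ > 1/2 and strictly negative if λ ≤ −1/2). -/
import Mathlib


open Matrix Finset
open scoped ComplexConjugate

noncomputable section

private lemma sum4_comm {ι κ A B : Type*} (s : Finset ι) (t : Finset κ)
    (u : Finset A) (w : Finset B) (f : ι → κ → A → B → ℂ) :
    ∑ k ∈ s, ∑ m ∈ t, ∑ α ∈ u, ∑ β ∈ w, f k m α β
      = ∑ α ∈ u, ∑ β ∈ w, ∑ k ∈ s, ∑ m ∈ t, f k m α β := by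
  calc ∑ k ∈ s, ∑ m ∈ t, ∑ α ∈ u, ∑ β ∈ w, f k m α β
      = ∑ k ∈ s, ∑ α ∈ u, ∑ m ∈ t, ∑ β ∈ w, f k m α β :=
        Finset.sum_congr rfl fun k _ => Finset.sum_comm
    _ = ∑ α ∈ u, ∑ k ∈ s, ∑ m ∈ t, ∑ β ∈ w, f k m α β := Finset.sum_comm
    _ = ∑ α ∈ u, ∑ k ∈ s, ∑ β ∈ w, ∑ m ∈ t, f k m α β :=
        Finset.sum_congr rfl fun α _ => Finset.sum_congr rfl fun k _ => Finset.sum_comm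
    _ = ∑ α ∈ u, ∑ β ∈ w, ∑ k ∈ s, ∑ m ∈ t, f k m α β :=
        Finset.sum_congr rfl fun α _ => Finset.sum_comm

/-- The contracted GPT `M_{nmlk}` as a harmonic combination of GPTs (see the
definition in Statement 4): `M_{nmlk} = Σ_{|α|=n,|β|=l} conj(a^{kl}_β) a^{mn}_α M_{αβ}`. -/
def cgpt (S : ℕ → Finset (Fin 3 → ℕ)) (GPT : (Fin 3 → ℕ) → (Fin 3 → ℕ) → ℝ)
    (a : ℕ → ℤ → (Fin 3 → ℕ) → ℂ) (n : ℕ) (m : ℤ) (l : ℕ) (k : ℤ) : ℂ :=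
  ∑ α ∈ S n, ∑ β ∈ S l, conj (a l k β) * a n m α * (GPT α β : ℂ)

/-- The diagonal CGPT matrix `M_{nn}` with `(M_{nn})_{km} = M_{nmnk}`. -/
def cgptMat (S : ℕ → Finset (Fin 3 → ℕ)) (GPT : (Fin 3 → ℕ) → (Fin 3 → ℕ) → ℝ)
    (a : ℕ → ℤ → (Fin 3 → ℕ) → ℂ) (l n : ℕ) :
    Matrix (Fin (2 * l + 1)) (Fin (2 * n + 1)) ℂ :=
  Matrix.of fun k m => cgpt S GPT a n ((m : ℤ) - n) l ((k : ℤ) - l)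

/-- The matrix `M_{nn}(D)` is invertible; more precisely, for
every nonzero `v ∈ ℂ^{2n+1}` the quadratic form `v* M_{nn} v` is nonzero
(strictly positive when `λ > 1/2`, strictly negative when `λ ≤ −1/2`).
Hypotheses: `S n` is the set of multi-indices of length `n`; `hsym` is the
symmetry of GPTs on harmonic combinations (making `v* M_{nn} v` real);
`Harm γ` expresses that `γ` is the coefficient vector of a harmonic
polynomial, `hHarm` says that the real and imaginary parts of the coefficient
vector of `Σ_m v_m r^n Y_n^m` are such; `hinj` says that `v ↦ Σ_m v_m r^n Y_n^m`
is injective; `hpos` is the positivity property of GPTs. -/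
theorem cgptMat_diag_invertible
    (n : ℕ) (hn : 1 ≤ n) (lam : ℝ) (hlam : 1 / 2 < |lam|)
    (S : ℕ → Finset (Fin 3 → ℕ))
    (hS : ∀ (ν : ℕ) (α : Fin 3 → ℕ), α ∈ S ν ↔ α 0 + α 1 + α 2 = ν)
    (GPT : (Fin 3 → ℕ) → (Fin 3 → ℕ) → ℝ)
    (a : ℕ → ℤ → (Fin 3 → ℕ) → ℂ)
    (hsym : ∀ (m k : ℤ),
      (∑ α ∈ S n, ∑ β ∈ S n, conj (a n k β) * a n m α * (GPT α β : ℂ)) =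
      ∑ α ∈ S n, ∑ β ∈ S n, conj (a n k β) * a n m α * (GPT β α : ℂ))
    (Harm : ((Fin 3 → ℕ) → ℝ) → Prop)
    (hHarm : ∀ v : Fin (2 * n + 1) → ℂ,
      Harm (fun α => (∑ m : Fin (2 * n + 1), v m * a n ((m : ℤ) - n) α).re) ∧
      Harm (fun α => (∑ m : Fin (2 * n + 1), v m * a n ((m : ℤ) - n) α).im))
    (hinj : ∀ v : Fin (2 * n + 1) → ℂ,
      (∀ α ∈ S n, (∑ m : Fin (2 * n + 1), v m * a n ((m : ℤ) - n) α) = 0) → v = 0)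
    (hpos : ∀ γ : (Fin 3 → ℕ) → ℝ, Harm γ → (∃ α ∈ S n, γ α ≠ 0) →
      ((1 / 2 < lam → 0 < ∑ α ∈ S n, ∑ β ∈ S n, γ α * GPT α β * γ β) ∧
       (lam ≤ -(1 / 2) → (∑ α ∈ S n, ∑ β ∈ S n, γ α * GPT α β * γ β) < 0))) :
    IsUnit (cgptMat S GPT a n n) ∧
    ∀ v : Fin (2 * n + 1) → ℂ, v ≠ 0 →
      (star v ⬝ᵥ (cgptMat S GPT a n n).mulVec v) ≠ 0 ∧
      (1 / 2 < lam → 0 < (star v ⬝ᵥ (cgptMat S GPT a n n).mulVec v).re) ∧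
      (lam ≤ -(1 / 2) → (star v ⬝ᵥ (cgptMat S GPT a n n).mulVec v).re < 0) := by
  classical
  set M := cgptMat S GPT a n n with hMdef
  have expand : ∀ v : Fin (2 * n + 1) → ℂ,
      star v ⬝ᵥ M.mulVec v =
      ∑ α ∈ S n, ∑ β ∈ S n,
        conj (∑ k : Fin (2 * n + 1), v k * a n ((k : ℤ) - n) β) *
        (∑ m : Fin (2 * n + 1), v m * a n ((m : ℤ) - n) α) * (GPT α β : ℂ) := by
    intro v
    simp only [hMdef, cgptMat, cgpt, dotProduct, mulVec, of_apply, Pi.star_apply,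
      RCLike.star_def, map_sum, _root_.map_mul, Finset.mul_sum, Finset.sum_mul]
    rw [sum4_comm]
    refine Finset.sum_congr rfl fun α _ => Finset.sum_congr rfl fun β _ => ?_
    rw [Finset.sum_comm]
    exact Finset.sum_congr rfl fun k _ => Finset.sum_congr rfl fun m _ => by ring
  have signP : ∀ γ : (Fin 3 → ℕ) → ℝ, Harm γ →
      ((1 / 2 < lam → 0 ≤ ∑ α ∈ S n, ∑ β ∈ S n, γ α * GPT α β * γ β) ∧
       (lam ≤ -(1 / 2) → (∑ α ∈ S n, ∑ β ∈ S n, γ α * GPT α β * γ β) ≤ 0)) := by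
    intro γ hγ
    by_cases hz : ∃ α ∈ S n, γ α ≠ 0
    · exact ⟨fun h => ((hpos γ hγ hz).1 h).le, fun h => ((hpos γ hγ hz).2 h).le⟩
    · push_neg at hz
      have hzero : (∑ α ∈ S n, ∑ β ∈ S n, γ α * GPT α β * γ β) = 0 :=
        Finset.sum_eq_zero fun α hα => Finset.sum_eq_zero fun β _ => by
          rw [hz α hα]; ring
      exact ⟨fun _ => hzero.ge, fun _ => hzero.le⟩
  have main : ∀ v : Fin (2 * n + 1) → ℂ, v ≠ 0 →
      (1 / 2 < lam → 0 < (star v ⬝ᵥ M.mulVec v).re) ∧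
      (lam ≤ -(1 / 2) → (star v ⬝ᵥ M.mulVec v).re < 0) := by
    intro v hv
    set w : (Fin 3 → ℕ) → ℂ :=
      fun α => ∑ m : Fin (2 * n + 1), v m * a n ((m : ℤ) - n) α with hw
    have hre : (star v ⬝ᵥ M.mulVec v).re
        = (∑ α ∈ S n, ∑ β ∈ S n, (w α).re * GPT α β * (w β).re)
          + (∑ α ∈ S n, ∑ β ∈ S n, (w α).im * GPT α β * (w β).im) := by
      rw [expand v]
      have hwb : ∀ β, (∑ k : Fin (2 * n + 1), v k * a n ((k : ℤ) - n) β) = w β :=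
        fun β => rfl
      simp only [hwb]
      clear_value w
      rw [← Finset.sum_add_distrib, Complex.re_sum]
      refine Finset.sum_congr rfl fun α _ => ?_
      rw [← Finset.sum_add_distrib, Complex.re_sum]
      refine Finset.sum_congr rfl fun β _ => ?_
      simp [Complex.mul_re, Complex.mul_im]
      ring
    obtain ⟨α₀, hα₀S, hα₀⟩ : ∃ α ∈ S n, w α ≠ 0 := by
      by_contra h; push_neg at h
      exact hv (hinj v fun α hα => h α hα)
    have hHv := hHarm v
    have hre1 : Harm fun α => (w α).re := hHv.1
    have him1 : Harm fun α => (w α).im := hHv.2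
    have hcases : (w α₀).re ≠ 0 ∨ (w α₀).im ≠ 0 := by
      by_contra h; push_neg at h
      exact hα₀ (Complex.ext h.1 h.2)
    constructor
    · intro hl
      rw [hre]
      rcases hcases with h | h
      · have h1 := (hpos _ hre1 ⟨α₀, hα₀S, h⟩).1 hl
        have h2 := (signP _ him1).1 hl
        linarith
      · have h1 := (hpos _ him1 ⟨α₀, hα₀S, h⟩).1 hl
        have h2 := (signP _ hre1).1 hl
        linarith
    · intro hl
      rw [hre]
      rcases hcases with h | h
      · have h1 := (hpos _ hre1 ⟨α₀, hα₀S, h⟩).2 hl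
        have h2 := (signP _ him1).2 hl
        linarith
      · have h1 := (hpos _ him1 ⟨α₀, hα₀S, h⟩).2 hl
        have h2 := (signP _ hre1).2 hl
        linarith
  have hne : ∀ v : Fin (2 * n + 1) → ℂ, v ≠ 0 → star v ⬝ᵥ M.mulVec v ≠ 0 := by
    intro v hv h0
    have hre0 : (star v ⬝ᵥ M.mulVec v).re = 0 := by rw [h0]; simp
    rcases lt_abs.mp hlam with h | h
    · exact absurd hre0 (ne_of_gt ((main v hv).1 h))
    · have : lam ≤ -(1 / 2) := by linarith
      exact absurd hre0 (ne_of_lt ((main v hv).2 this))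
  have hinjM : Function.Injective M.mulVec := by
    intro x y hxy
    by_contra hxyne
    have hxy0 : M.mulVec (x - y) = 0 := by
      rw [Matrix.mulVec_sub, hxy, sub_self]
    have hx0 : x - y ≠ 0 := sub_ne_zero.mpr hxyne
    exact hne (x - y) hx0 (by rw [hxy0]; simp)
  refine ⟨Matrix.mulVec_injective_iff_isUnit.mp hinjM, fun v hv => ?_⟩
  exact ⟨hne v hv, (main v hv).1, (main v hv).2⟩
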